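/- arXiv:2309.12025 — 2 statements merged into one kernel-verified Lean document; each statement's English description precedes it below -/
import Mathlib

section
/- Let f be a nonnegative k-submodular function with f(0) = 0, let (e_1,i_1),…,(e_t,i_t) be an LAA run, and let o be a k-set with c(o) ≤ B such that for every e ∈ supp(o) \ supp(x^t) and every i ∈ {1,…,k}, Δ_{(e,i)}f(x^t) ≤ c(e)·f(x^t)/B. Then f(o) ≤ 6·f(x^t). -/
/-- The meet `x ⊓ y` of two `k`-sets, with components `Xᵢ ∩ Yᵢ`. -/
def sqcap {V : Type*} (x y : V → ℕ) : V → ℕ :=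
  fun e => if x e = y e then x e else 0

/-- The join `x ⊔ y` of two `k`-sets, with components
`Zᵢ = (Xᵢ ∪ Yᵢ) \ ⋃_{j ≠ i} (Xⱼ ∪ Yⱼ)`. -/
def sqcup {V : Type*} (x y : V → ℕ) : V → ℕ :=
  fun e =>
    if x e = 0 then y e
    else if y e = 0 then x e
    else if x e = y e then x e else 0

/-- A `k`-set: every element gets a position in `{0, 1, …, k}`
(`0` meaning unselected). -/
def IsKSet {V : Type*} (k : ℕ) (x : V → ℕ) : Prop := ∀ e, x e ≤ k

/-- `x ⊑ y`: every component of `x` is contained in the corresponding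
component of `y`. -/
def KLE {V : Type*} (x y : V → ℕ) : Prop := ∀ e, x e ≠ 0 → y e = x e

/-- The singleton `k`-set `(e, i)`. -/
def singl {V : Type*} [DecidableEq V] (e : V) (i : ℕ) : V → ℕ :=
  fun e' => if e' = e then i else 0

/-- `k`-submodularity: `f x + f y ≥ f (x ⊓ y) + f (x ⊔ y)` for all `k`-sets. -/
def KSubmodular {V : Type*} (k : ℕ) (f : (V → ℕ) → ℝ) : Prop :=
  ∀ x y : V → ℕ, IsKSet k x → IsKSet k y →
    f x + f y ≥ f (sqcap x y) + f (sqcup x y)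

/-- The marginal gain `Δ_{(e,i)} f(x) = f (x ⊔ (e,i)) - f x`. -/
def marg {V : Type*} [DecidableEq V] (f : (V → ℕ) → ℝ) (e : V) (i : ℕ)
    (x : V → ℕ) : ℝ :=
  f (sqcup x (singl e i)) - f x

/-- The cost of a `k`-set: the total cost of its support. -/
noncomputable def cost {V : Type*} [Fintype V] (c : V → ℝ) (x : V → ℕ) : ℝ :=
  ∑ e ∈ Finset.univ.filter (fun e => x e ≠ 0), c e

section Aux
variable {V : Type*} [DecidableEq V]

lemma sqcup_singl_eq (x : V → ℕ) (e : V) (i : ℕ) (hx : x e = 0) :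
    sqcup x (singl e i) = Function.update x e i := by
  funext e'
  by_cases h : e' = e
  · subst h; simp [sqcup, singl, hx]
  · by_cases hz : x e' = 0 <;> simp [sqcup, singl, h, hz]

lemma marg_eq (f : (V → ℕ) → ℝ) (e : V) (i : ℕ) {x : V → ℕ} (hx : x e = 0) :
    marg f e i x = f (Function.update x e i) - f x := by
  rw [marg, sqcup_singl_eq x e i hx]

lemma isKSet_update {k : ℕ} {x : V → ℕ} (hx : IsKSet k x) {i : ℕ} (hik : i ≤ k) (e : V) :
    IsKSet k (Function.update x e i) := by
  intro e'
  by_cases h : e' = e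
  · subst h; simpa using hik
  · rw [Function.update_of_ne h]; exact hx e'

lemma pairwise_mono {k : ℕ} {f : (V → ℕ) → ℝ} (hsub : KSubmodular k f)
    {y : V → ℕ} (hy : IsKSet k y) {e : V} (he : y e = 0)
    {i j : ℕ} (hi0 : i ≠ 0) (hik : i ≤ k) (hj0 : j ≠ 0) (hjk : j ≤ k) (hij : i ≠ j) :
    f y + f y ≤ f (Function.update y e i) + f (Function.update y e j) := by
  have h := hsub (Function.update y e i) (Function.update y e j)
    (isKSet_update hy hik e) (isKSet_update hy hjk e)
  have hcap : sqcap (Function.update y e i) (Function.update y e j) = y := by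
    funext e'
    by_cases h' : e' = e
    · subst h'; simp [sqcap, hij, he]
    · simp [sqcap, Function.update_of_ne h']
  have hcup : sqcup (Function.update y e i) (Function.update y e j) = y := by
    funext e'
    by_cases h' : e' = e
    · subst h'; simp [sqcup, hi0, hj0, hij, he]
    · by_cases hz : y e' = 0 <;> simp [sqcup, Function.update_of_ne h', hz]
  rw [hcap, hcup] at h
  linarith

lemma orthant {k : ℕ} {f : (V → ℕ) → ℝ} (hsub : KSubmodular k f)
    {x y : V → ℕ} (hx : IsKSet k x) (hy : IsKSet k y) (hxy : KLE x y)
    {e : V} (hye : y e = 0) {i : ℕ} (hi0 : i ≠ 0) (hik : i ≤ k) :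
    f (Function.update y e i) - f y ≤ f (Function.update x e i) - f x := by
  have hxe : x e = 0 := by
    by_contra h
    have := hxy e h
    rw [hye] at this
    exact h this.symm
  have h := hsub (Function.update x e i) y (isKSet_update hx hik e) hy
  have hcap : sqcap (Function.update x e i) y = x := by
    funext e'
    by_cases h' : e' = e
    · subst h'; simp [sqcap, hye, hi0, hxe]
    · by_cases hz : x e' = 0
      · by_cases hz' : y e' = 0 <;> simp [sqcap, Function.update_of_ne h', hz, hz']
      · have := hxy e' hz
        simp [sqcap, Function.update_of_ne h', this]
  have hcup : sqcup (Function.update x e i) y = Function.update y e i := by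
    funext e'
    by_cases h' : e' = e
    · subst h'; simp [sqcup, hye, hi0]
    · by_cases hz : x e' = 0
      · simp [sqcup, Function.update_of_ne h', hz]
      · have := hxy e' hz
        simp [sqcup, Function.update_of_ne h', hz, this]
  rw [hcap, hcup] at h
  linarith

end Aux

/-- `o` modified so that all elements selected by `xt` get their `xt` positions. -/
def Oset {V : Type*} (o xt : V → ℕ) : V → ℕ :=
  fun e' => if xt e' = 0 then o e' else xt e'

/-- `xt` supplemented with a finite set `s` of elements given their `o` positions. -/
def Zset {V : Type*} [DecidableEq V] (o xt : V → ℕ) (s : Finset V) : V → ℕ :=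
  fun e' => if xt e' = 0 then (if e' ∈ s then o e' else 0) else xt e'

/-- if no remaining element of `o` passes the density test at the
end of the LAA run, then `f(o) ≤ 6 f(x^t)`. -/
theorem stmt3 {V : Type*} [Fintype V] [DecidableEq V]
    (k : ℕ) (hk : 2 ≤ k)
    (f : (V → ℕ) → ℝ)
    (hsub : KSubmodular k f)
    (hnn : ∀ x : V → ℕ, IsKSet k x → 0 ≤ f x)
    (hf0 : f (fun _ => 0) = 0)
    (c : V → ℝ) (hc : ∀ e, 0 < c e) (B : ℝ) (hB : 0 < B)
    (t : ℕ) (e : ℕ → V) (pos : ℕ → ℕ)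
    (hdist : ∀ j₁ j₂, j₁ < t → j₂ < t → e j₁ = e j₂ → j₁ = j₂)
    (hposk : ∀ j < t, 1 ≤ pos j ∧ pos j ≤ k)
    (x : ℕ → (V → ℕ))
    (hx0 : x 0 = fun _ => 0)
    (hxsucc : ∀ j < t, x (j + 1) = sqcup (x j) (singl (e j) (pos j)))
    (hbest : ∀ j < t, ∀ l, 1 ≤ l → l ≤ k →
      f (sqcup (x j) (singl (e j) l)) ≤ f (sqcup (x j) (singl (e j) (pos j))))
    (hgain : ∀ j < t, c (e j) * f (x j) / B ≤ marg f (e j) (pos j) (x j))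
    (hlight : ∀ j < t, c (e j) ≤ B / 2)
    (o : V → ℕ) (ho : IsKSet k o) (hoB : cost c o ≤ B)
    (hsat : ∀ e', o e' ≠ 0 → x t e' = 0 → ∀ i, 1 ≤ i → i ≤ k →
      marg f e' i (x t) ≤ c e' * f (x t) / B) :
    f o ≤ 6 * f (x t) := by
  classical
  -- support of the chain
  have hsupp : ∀ j, j ≤ t → ∀ v, x j v ≠ 0 → ∃ r, r < j ∧ v = e r := by
    intro j
    induction j with
    | zero => intro _ v hv; rw [hx0] at hv; simp at hv
    | succ n ih =>
      intro hj v hv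
      have hn : n < t := hj
      rw [hxsucc n hn] at hv
      by_cases hv' : v = e n
      · exact ⟨n, Nat.lt_succ_self n, hv'⟩
      · by_cases hz : x n v = 0
        · simp [sqcup, singl, hv', hz] at hv
        · obtain ⟨r, hr, hre⟩ := ih (le_of_lt hn) v hz
          exact ⟨r, Nat.lt_succ_of_lt hr, hre⟩
  have hxe0 : ∀ j, j < t → x j (e j) = 0 := by
    intro j hj
    by_contra h
    obtain ⟨r, hr, hre⟩ := hsupp j hj.le (e j) h
    have := hdist j r hj (hr.trans hj) hre
    omega
  have hupdate : ∀ j, j < t → x (j + 1) = Function.update (x j) (e j) (pos j) := by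
    intro j hj
    rw [hxsucc j hj, sqcup_singl_eq _ _ _ (hxe0 j hj)]
  have hxk : ∀ j, j ≤ t → IsKSet k (x j) := by
    intro j
    induction j with
    | zero => intro _ e'; rw [hx0]; exact Nat.zero_le k
    | succ n ih =>
      intro hj
      have hn : n < t := hj
      rw [hupdate n hn]
      exact isKSet_update (ih hn.le) (hposk n hn).2 _
  have hfx : ∀ j, j ≤ t → 0 ≤ f (x j) := fun j hj => hnn _ (hxk j hj)
  have hmargj : ∀ j, j < t → marg f (e j) (pos j) (x j) = f (x (j + 1)) - f (x j) := by
    intro j hj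
    rw [marg_eq f _ _ (hxe0 j hj), ← hupdate j hj]
  have hΔ : ∀ j, j < t → 0 ≤ f (x (j + 1)) - f (x j) := by
    intro j hj
    have h1 := hgain j hj
    rw [hmargj j hj] at h1
    have h2 : 0 ≤ c (e j) * f (x j) / B :=
      div_nonneg (mul_nonneg (hc _).le (hfx j hj.le)) hB.le
    linarith
  have hOk : ∀ j, j ≤ t → IsKSet k (Oset o (x j)) := by
    intro j hj e'
    unfold Oset
    split_ifs
    · exact ho e'
    · exact hxk j hj e'
  have hKLE : ∀ j, KLE (x j) (Oset o (x j)) := by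
    intro j e' h'
    simp [Oset, h']
  -- per-step loss bound
  have hstep : ∀ j, j < t →
      f (Oset o (x j)) ≤ f (Oset o (x (j + 1))) + 2 * (f (x (j + 1)) - f (x j)) := by
    intro j hj
    have hy0 : x j (e j) = 0 := hxe0 j hj
    have hup := hupdate j hj
    have hpos0 : pos j ≠ 0 := by have := (hposk j hj).1; omega
    have hOsucc : Oset o (x (j + 1)) = Function.update (Oset o (x j)) (e j) (pos j) := by
      funext e'
      by_cases h' : e' = e j
      · subst h'; rw [hup]; simp [Oset, hpos0]
      · rw [hup]; simp [Oset, Function.update_of_ne h']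
    have hOj_e : Oset o (x j) (e j) = o (e j) := by simp [Oset, hy0]
    have hΔj := hΔ j hj
    have hbest' : ∀ l, 1 ≤ l → l ≤ k →
        f (Function.update (x j) (e j) l) - f (x j) ≤ f (x (j + 1)) - f (x j) := by
      intro l h1 h2
      have hb := hbest j hj l h1 h2
      rw [sqcup_singl_eq _ _ _ hy0, sqcup_singl_eq _ _ _ hy0] at hb
      rw [hup]
      linarith
    by_cases hov : o (e j) = pos j
    · have hEq : Oset o (x (j + 1)) = Oset o (x j) := by
        rw [hOsucc, ← hov, ← hOj_e, Function.update_eq_self]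
      rw [hEq]; linarith
    by_cases hov0 : o (e j) = 0
    · have hO0 : Oset o (x j) (e j) = 0 := by rw [hOj_e, hov0]
      set l : ℕ := if pos j = 1 then 2 else 1 with hl
      have hl0 : l ≠ 0 := by rw [hl]; split_ifs <;> omega
      have hlk : l ≤ k := by rw [hl]; split_ifs <;> omega
      have hlp : pos j ≠ l := by rw [hl]; split_ifs with h <;> omega
      have hpm := pairwise_mono hsub (hOk j hj.le) hO0 hpos0 (hposk j hj).2 hl0 hlk hlp
      have hor := orthant hsub (hxk j hj.le) (hOk j hj.le) (hKLE j) hO0 hl0 hlk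
      have hb := hbest' l (by omega) hlk
      rw [hOsucc]
      linarith
    · set o' := Function.update (Oset o (x j)) (e j) 0 with ho'
      have ho'0 : o' (e j) = 0 := by simp [ho']
      have ho'k : IsKSet k o' := isKSet_update (hOk j hj.le) (Nat.zero_le k) _
      have hOj_eq : Oset o (x j) = Function.update o' (e j) (o (e j)) := by
        rw [ho', Function.update_idem, ← hOj_e, Function.update_eq_self]
      have hOsucc' : Oset o (x (j + 1)) = Function.update o' (e j) (pos j) := by
        rw [hOsucc, ho', Function.update_idem]
      have hKLE' : KLE (x j) o' := by
        intro e' h'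
        have hne : e' ≠ e j := by intro hh; rw [hh] at h'; exact h' hy0
        rw [ho', Function.update_of_ne hne]
        exact hKLE j e' h'
      have hoek : o (e j) ≤ k := ho (e j)
      have hpm := pairwise_mono hsub ho'k ho'0 hpos0 (hposk j hj).2 hov0 hoek
        (fun hh => hov hh.symm)
      have hor := orthant hsub (hxk j hj.le) ho'k hKLE' ho'0 hov0 hoek
      have hb := hbest' (o (e j)) (Nat.one_le_iff_ne_zero.mpr hov0) hoek
      rw [hOj_eq, hOsucc']
      linarith
  -- Part B: accumulate the per-step losses
  have hPartB : ∀ j, j ≤ t →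
      f (Oset o (x 0)) ≤ f (Oset o (x j)) + 2 * (f (x j) - f (x 0)) := by
    intro j
    induction j with
    | zero => intro _; linarith
    | succ n ih =>
      intro hj
      have hn : n < t := hj
      have h1 := hstep n hn
      have h2 := ih hn.le
      linarith
  have hO0eq : Oset o (x 0) = o := by
    funext e'
    simp [Oset, hx0]
  have hfx0 : f (x 0) = 0 := by rw [hx0]; exact hf0
  -- Part A: f (Oset o (x t)) ≤ 2 f (x t)
  set S : Finset V := Finset.univ.filter (fun e' => o e' ≠ 0 ∧ x t e' = 0) with hS
  have claimA : ∀ s : Finset V, s ⊆ S →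
      f (Zset o (x t) s) ≤ f (x t) + (∑ e' ∈ s, c e') * (f (x t) / B) := by
    intro s
    induction s using Finset.induction_on with
    | empty =>
      intro _
      have hze : Zset o (x t) (∅ : Finset V) = x t := by
        funext e'
        by_cases hz : x t e' = 0 <;> simp [Zset, hz]
      rw [hze]
      simp
    | @insert a s ha ih =>
      intro hins
      have hmem := Finset.insert_subset_iff.mp hins
      have haS : a ∈ S := hmem.1
      have hsS : s ⊆ S := hmem.2
      rw [hS, Finset.mem_filter] at haS
      have hoa : o a ≠ 0 := haS.2.1
      have hxa : x t a = 0 := haS.2.2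
      have hzs_a : Zset o (x t) s a = 0 := by simp [Zset, hxa, ha]
      have hz_ins : Zset o (x t) (insert a s) = Function.update (Zset o (x t) s) a (o a) := by
        funext e'
        by_cases h' : e' = a
        · subst h'; simp [Zset, hxa]
        · simp [Zset, Function.update_of_ne h', h']
      have hKLEz : KLE (x t) (Zset o (x t) s) := by
        intro e' h'
        simp [Zset, h']
      have hzk : IsKSet k (Zset o (x t) s) := by
        intro e'
        unfold Zset
        split_ifs
        · exact ho e'
        · exact Nat.zero_le k
        · exact hxk t le_rfl e'
      have hor := orthant hsub (hxk t le_rfl) hzk hKLEz hzs_a hoa (ho a)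
      have hmargA : f (Function.update (x t) a (o a)) - f (x t) ≤ c a * f (x t) / B := by
        have hs := hsat a hoa hxa (o a) (Nat.one_le_iff_ne_zero.mpr hoa) (ho a)
        rwa [marg_eq f _ _ hxa] at hs
      have hih := ih hsS
      rw [hz_ins, Finset.sum_insert ha]
      have hexp : (c a + ∑ e' ∈ s, c e') * (f (x t) / B)
          = c a * f (x t) / B + (∑ e' ∈ s, c e') * (f (x t) / B) := by ring
      rw [hexp]
      linarith
  have hZS : Zset o (x t) S = Oset o (x t) := by
    funext e'
    by_cases hz : x t e' = 0
    · by_cases ho' : o e' = 0 <;> simp [Zset, Oset, hS, hz, ho']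
    · simp [Zset, Oset, hz]
  have hSsum : ∑ e' ∈ S, c e' ≤ B := by
    have h1 : ∑ e' ∈ S, c e' ≤ cost c o := by
      apply Finset.sum_le_sum_of_subset_of_nonneg
      · intro a ha
        rw [hS, Finset.mem_filter] at ha
        simp [Finset.mem_filter, ha.2.1]
      · intro i _ _
        exact (hc i).le
    linarith
  have hFt : 0 ≤ f (x t) := hfx t le_rfl
  have hA := claimA S (le_refl S)
  rw [hZS] at hA
  have hmul : (∑ e' ∈ S, c e') * (f (x t) / B) ≤ B * (f (x t) / B) :=
    mul_le_mul_of_nonneg_right hSsum (div_nonneg hFt hB.le)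
  have hBF : B * (f (x t) / B) = f (x t) := by field_simp
  have hPB := hPartB t le_rfl
  rw [hO0eq, hfx0] at hPB
  linarith
end

section
/- Let f be a nonnegative k-submodular function with f(0) = 0 and let (e_1,i_1),…,(e_t,i_t) be an LAA run. Let T ∈ {0,…,t} be such that c(x_T) ≤ B and c(x_T) ≥ c(x_j) for every j ∈ {0,…,t} with c(x_j) ≤ B, and set x' = x_T. Let o be a k-set with c(o) ≤ B such that for every e ∈ supp(o) \ supp(x^t) and every i ∈ {1,…,k}, Δ_{(e,i)}f(x^t) ≤ c(e)·f(x^t)/B. Then f(x') ≥ f(o)/18. -/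
lemma sqcap_apply {V : Type*} (x y : V → ℕ) (e : V) :
    sqcap x y e = if x e = y e then x e else 0 := rfl

lemma sqcup_apply {V : Type*} (x y : V → ℕ) (e : V) :
    sqcup x y e = if x e = 0 then y e
      else if y e = 0 then x e
      else if x e = y e then x e else 0 := rfl

lemma sqcup_singl_ne {V : Type*} [DecidableEq V] (z : V → ℕ) {e0 e' : V} (h : e' ≠ e0) (i : ℕ) :
    sqcup z (singl e0 i) e' = z e' := by
  simp only [sqcup, singl, if_neg h]
  by_cases hz : z e' = 0 <;> simp [hz]

lemma sqcup_singl_self {V : Type*} [DecidableEq V] (z : V → ℕ) {e0 : V} (h : z e0 = 0) (i : ℕ) :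
    sqcup z (singl e0 i) e0 = i := by
  simp [sqcup, singl, h]

lemma isKSet_sqcup {V : Type*} {k : ℕ} {x y : V → ℕ} (hx : IsKSet k x) (hy : IsKSet k y) :
    IsKSet k (sqcup x y) := by
  intro e; unfold sqcup
  split_ifs <;> first | exact hy e | exact hx e | exact Nat.zero_le k

lemma isKSet_singl {V : Type*} [DecidableEq V] {k i : ℕ} (hi : i ≤ k) (e : V) :
    IsKSet k (singl e i) := by
  intro e'; unfold singl; split_ifs <;> simp [hi]

/-- pairwise monotonicity -/
lemma pm_lemma {V : Type*} [DecidableEq V] {k : ℕ} {f : (V → ℕ) → ℝ}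
    (hsub : KSubmodular k f) (z : V → ℕ) (hz : IsKSet k z) (e0 : V) (hz0 : z e0 = 0)
    (i j : ℕ) (hi0 : i ≠ 0) (hj0 : j ≠ 0) (hik : i ≤ k) (hjk : j ≤ k) (hij : i ≠ j) :
    2 * f z ≤ f (sqcup z (singl e0 i)) + f (sqcup z (singl e0 j)) := by
  have h := hsub (sqcup z (singl e0 i)) (sqcup z (singl e0 j))
    (isKSet_sqcup hz (isKSet_singl hik e0)) (isKSet_sqcup hz (isKSet_singl hjk e0))
  have hcap : sqcap (sqcup z (singl e0 i)) (sqcup z (singl e0 j)) = z := by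
    funext e'
    by_cases he : e' = e0
    · subst he
      rw [sqcap_apply, sqcup_singl_self z hz0, sqcup_singl_self z hz0]
      simp [hij, hz0]
    · rw [sqcap_apply, sqcup_singl_ne z he, sqcup_singl_ne z he]
      simp
  have hcup : sqcup (sqcup z (singl e0 i)) (sqcup z (singl e0 j)) = z := by
    funext e'
    by_cases he : e' = e0
    · subst he
      rw [sqcup_apply, sqcup_singl_self z hz0, sqcup_singl_self z hz0]
      simp [hi0, hj0, hij, hz0]
    · rw [sqcup_apply, sqcup_singl_ne z he, sqcup_singl_ne z he]
      by_cases hze : z e' = 0 <;> simp [hze]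
  rw [hcap, hcup] at h
  linarith
/-- orthant submodularity -/
lemma orth_lemma {V : Type*} [DecidableEq V] {k : ℕ} {f : (V → ℕ) → ℝ}
    (hsub : KSubmodular k f) (u z : V → ℕ) (hu : IsKSet k u) (hz : IsKSet k z)
    (hle : KLE u z) (e0 : V) (hz0 : z e0 = 0) (i : ℕ) (hi0 : i ≠ 0) (hik : i ≤ k) :
    f (sqcup z (singl e0 i)) - f z ≤ f (sqcup u (singl e0 i)) - f u := by
  have hu0 : u e0 = 0 := by
    by_contra h
    exact h ((hle e0 h).symm.trans hz0)
  have h := hsub (sqcup u (singl e0 i)) z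
    (isKSet_sqcup hu (isKSet_singl hik e0)) hz
  have hcap : sqcap (sqcup u (singl e0 i)) z = u := by
    funext e'
    by_cases he : e' = e0
    · subst he
      rw [sqcap_apply, sqcup_singl_self u hu0]
      simp [hz0, hi0, hu0]
    · rw [sqcap_apply, sqcup_singl_ne u he]
      by_cases hue : u e' = 0
      · simp [hue]
      · simp [hle e' hue, hue]
  have hcup : sqcup (sqcup u (singl e0 i)) z = sqcup z (singl e0 i) := by
    funext e'
    by_cases he : e' = e0
    · subst he
      rw [sqcup_apply, sqcup_singl_self u hu0, sqcup_singl_self z hz0]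
      simp [hi0, hz0]
    · rw [sqcup_apply, sqcup_singl_ne u he, sqcup_singl_ne z he]
      by_cases hue : u e' = 0
      · simp [hue]
      · simp [hue, hle e' hue]
  rw [hcap, hcup] at h
  linarith

/-- disjoint union bound -/
lemma dis_lemma {V : Type*} {k : ℕ} {f : (V → ℕ) → ℝ}
    (hsub : KSubmodular k f) (hf0 : f (fun _ => 0) = 0)
    (u v : V → ℕ) (hu : IsKSet k u) (hv : IsKSet k v)
    (hd : ∀ e', u e' = 0 ∨ v e' = 0) :
    f (sqcup u v) ≤ f u + f v := by
  have h := hsub u v hu hv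
  have hcap : sqcap u v = (fun _ => 0) := by
    funext e'
    rw [sqcap_apply]
    rcases hd e' with h0 | h0
    · simp [h0]
    · rw [h0]; split_ifs with hh
      exacts [hh, rfl]
  rw [hcap, hf0] at h
  linarith

/-- combining the suffix selection with the density saturation of
`o`, the maximal-cost feasible suffix `x' = x_T` satisfies `f(x') ≥ f(o)/18`. -/
theorem stmt4 {V : Type*} [Fintype V] [DecidableEq V]
    (k : ℕ) (hk : 2 ≤ k)
    (f : (V → ℕ) → ℝ)
    (hsub : KSubmodular k f)
    (hnn : ∀ x : V → ℕ, IsKSet k x → 0 ≤ f x)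
    (hf0 : f (fun _ => 0) = 0)
    (c : V → ℝ) (hc : ∀ e, 0 < c e) (B : ℝ) (hB : 0 < B)
    (t : ℕ) (e : ℕ → V) (pos : ℕ → ℕ)
    (hdist : ∀ j₁ j₂, j₁ < t → j₂ < t → e j₁ = e j₂ → j₁ = j₂)
    (hposk : ∀ j < t, 1 ≤ pos j ∧ pos j ≤ k)
    (x : ℕ → (V → ℕ))
    (hx0 : x 0 = fun _ => 0)
    (hxsucc : ∀ j < t, x (j + 1) = sqcup (x j) (singl (e j) (pos j)))
    (hbest : ∀ j < t, ∀ l, 1 ≤ l → l ≤ k →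
      f (sqcup (x j) (singl (e j) l)) ≤ f (sqcup (x j) (singl (e j) (pos j))))
    (hgain : ∀ j < t, c (e j) * f (x j) / B ≤ marg f (e j) (pos j) (x j))
    (hlight : ∀ j < t, c (e j) ≤ B / 2)
    (xs : ℕ → (V → ℕ))
    (hxs0 : xs 0 = fun _ => 0)
    (hxssucc : ∀ j < t, xs (j + 1) = sqcup (xs j) (singl (e (t - 1 - j)) (pos (t - 1 - j))))
    (T : ℕ) (hTt : T ≤ t) (hTB : cost c (xs T) ≤ B)
    (hTmax : ∀ j ≤ t, cost c (xs j) ≤ B → cost c (xs j) ≤ cost c (xs T))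
    (o : V → ℕ) (ho : IsKSet k o) (hoB : cost c o ≤ B)
    (hsat : ∀ e', o e' ≠ 0 → x t e' = 0 → ∀ i, 1 ≤ i → i ≤ k →
      marg f e' i (x t) ≤ c e' * f (x t) / B) :
    f o / 18 ≤ f (xs T) := by
  classical
  have hx0' : ∀ e', x 0 e' = 0 := fun e' => congrFun hx0 e'
  have hxs0' : ∀ e', xs 0 e' = 0 := fun e' => congrFun hxs0 e'
  -- support of prefixes
  have hA : ∀ j, j ≤ t → (∀ m, m < j → x j (e m) = pos m) ∧
      (∀ e', (∀ m, m < j → e' ≠ e m) → x j e' = 0) := by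
    intro j
    induction j with
    | zero => exact fun _ => ⟨fun m hm => absurd hm (Nat.not_lt_zero m), fun e' _ => hx0' e'⟩
    | succ j ih =>
      intro hj
      have hjt : j < t := hj
      obtain ⟨ihA, ihB⟩ := ih (le_of_lt hjt)
      have hxj : x (j+1) = sqcup (x j) (singl (e j) (pos j)) := hxsucc j hjt
      have hxje : x j (e j) = 0 := by
        apply ihB
        intro m hm hEq
        exact absurd (hdist j m hjt (lt_trans hm hjt) hEq) (Nat.ne_of_gt hm)
      constructor
      · intro m hm
        rcases Nat.lt_succ_iff_lt_or_eq.mp hm with hm' | rfl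
        · have hne : e m ≠ e j := fun hEq =>
            absurd (hdist m j (lt_trans hm' hjt) hjt hEq) (Nat.ne_of_lt hm')
          rw [hxj, sqcup_singl_ne _ hne, ihA m hm']
        · rw [hxj, sqcup_singl_self _ hxje]
      · intro e' he'
        rw [hxj, sqcup_singl_ne _ (he' j (Nat.lt_succ_self j))]
        exact ihB e' (fun m hm => he' m (lt_trans hm (Nat.lt_succ_self j)))
  -- support of suffixes
  have hA' : ∀ j, j ≤ t → (∀ m, t - j ≤ m → m < t → xs j (e m) = pos m) ∧
      (∀ e', (∀ m, t - j ≤ m → m < t → e' ≠ e m) → xs j e' = 0) := by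
    intro j
    induction j with
    | zero =>
      intro _
      exact ⟨fun m h1 h2 => absurd h1 (by omega), fun e' _ => hxs0' e'⟩
    | succ j ih =>
      intro hj
      have hjt : j < t := hj
      obtain ⟨ihA, ihB⟩ := ih (le_of_lt hjt)
      have hxsj : xs (j+1) = sqcup (xs j) (singl (e (t - 1 - j)) (pos (t - 1 - j))) :=
        hxssucc j hjt
      have hrt : t - 1 - j < t := by omega
      have hxsr : xs j (e (t - 1 - j)) = 0 := by
        apply ihB
        intro m h1 h2 hEq
        have := hdist (t - 1 - j) m hrt h2 hEq
        omega
      constructor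
      · intro m h1 h2
        by_cases hm : m = t - 1 - j
        · subst hm; rw [hxsj, sqcup_singl_self _ hxsr]
        · have hne : e m ≠ e (t - 1 - j) := fun hEq => hm (hdist m (t - 1 - j) h2 hrt hEq)
          rw [hxsj, sqcup_singl_ne _ hne]
          exact ihA m (by omega) h2
      · intro e' he'
        have hne : e' ≠ e (t - 1 - j) := he' (t - 1 - j) (by omega) hrt
        rw [hxsj, sqcup_singl_ne _ hne]
        exact ihB e' (fun m h1 h2 => he' m (by omega) h2)
  -- k-set properties
  have hxk : ∀ j, j ≤ t → IsKSet k (x j) := by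
    intro j hj e'
    by_cases h : ∃ m, m < j ∧ e' = e m
    · obtain ⟨m, hm, rfl⟩ := h
      rw [(hA j hj).1 m hm]
      exact (hposk m (lt_of_lt_of_le hm hj)).2
    · push_neg at h
      rw [(hA j hj).2 e' h]
      exact Nat.zero_le k
  have hxsk : ∀ j, j ≤ t → IsKSet k (xs j) := by
    intro j hj e'
    by_cases h : ∃ m, t - j ≤ m ∧ m < t ∧ e' = e m
    · obtain ⟨m, h1, h2, rfl⟩ := h
      rw [(hA' j hj).1 m h1 h2]
      exact (hposk m h2).2
    · push_neg at h
      rw [(hA' j hj).2 e' (fun m h1 h2 => h m h1 h2)]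
      exact Nat.zero_le k
  have hfnn : ∀ j, j ≤ t → 0 ≤ f (x j) := fun j hj => hnn _ (hxk j hj)
  -- marginal identities
  have hmarg : ∀ j, j < t → f (x (j+1)) - f (x j) = marg f (e j) (pos j) (x j) := by
    intro j hj
    rw [marg, hxsucc j hj]
  have hdnn : ∀ j, j < t → 0 ≤ f (x (j+1)) - f (x j) := by
    intro j hj
    rw [hmarg j hj]
    refine le_trans ?_ (hgain j hj)
    exact div_nonneg (mul_nonneg (hc _).le (hfnn j hj.le)) hB.le
  -- growth
  have hstep : ∀ j, j < t → f (x j) + f (x j) * (c (e j) / B) ≤ f (x (j+1)) := by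
    intro j hj
    have hg := hgain j hj
    rw [← hmarg j hj] at hg
    have heq : c (e j) * f (x j) / B = f (x j) * (c (e j) / B) := by ring
    linarith [heq ▸ hg]
  have grow : ∀ m, m ≤ t → ∀ j, m ≤ j → j ≤ t →
      f (x m) * (1 + (∑ i ∈ Finset.Ico m j, c (e i)) / B) ≤ f (x j) := by
    intro m hm j
    induction j with
    | zero =>
      intro h1 _
      have : m = 0 := Nat.le_zero.mp h1
      subst this
      simp
    | succ j ih =>
      intro h1 h2
      have hjt : j < t := h2
      by_cases hmj : m = j + 1
      · subst hmj; simp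
      · have hmj' : m ≤ j := by omega
        have ihh := ih hmj' (le_of_lt hjt)
        have hst := hstep j hjt
        rw [Finset.sum_Ico_succ_top hmj']
        have hS : 0 ≤ ∑ i ∈ Finset.Ico m j, c (e i) :=
          Finset.sum_nonneg (fun i _ => (hc (e i)).le)
        have hcB : 0 ≤ c (e j) / B := div_nonneg (hc _).le hB.le
        have hm0 : 0 ≤ f (x m) := hfnn m hm
        have hj0 : 0 ≤ f (x j) := hfnn j hjt.le
        have hfm_le : f (x m) ≤ f (x j) := by
          nlinarith [ihh, mul_nonneg hm0 (div_nonneg hS hB.le)]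
        have h2' : f (x m) * (c (e j) / B) ≤ f (x j) * (c (e j) / B) :=
          mul_le_mul_of_nonneg_right hfm_le hcB
        rw [add_div]
        nlinarith [ihh, hst, h2']
  -- cost of suffixes
  have hcost : ∀ j, j ≤ t → cost c (xs j) = ∑ i ∈ Finset.Ico (t - j) t, c (e i) := by
    intro j hj
    have hset : Finset.univ.filter (fun e' => xs j e' ≠ 0) = (Finset.Ico (t - j) t).image e := by
      ext e'
      simp only [Finset.mem_filter, Finset.mem_univ, true_and, Finset.mem_image, Finset.mem_Ico]
      constructor
      · intro hne
        by_contra h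
        push_neg at h
        exact hne ((hA' j hj).2 e' (fun m h1 h2 hEq => (h m ⟨h1, h2⟩) hEq.symm))
      · rintro ⟨m, ⟨h1, h2⟩, rfl⟩
        rw [(hA' j hj).1 m h1 h2]
        have := (hposk m h2).1
        omega
    rw [cost, hset, Finset.sum_image]
    intro m1 hm1 m2 hm2 hEq
    simp only [Finset.mem_coe, Finset.mem_Ico] at hm1 hm2
    exact hdist m1 m2 hm1.2 hm2.2 hEq
  -- prefix + suffix
  have hps : f (x t) ≤ f (x (t - T)) + f (xs T) := by
    have hmt : t - T ≤ t := Nat.sub_le t T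
    have hd : ∀ e', x (t - T) e' = 0 ∨ xs T e' = 0 := by
      intro e'
      by_cases h : ∃ i, i < t - T ∧ e' = e i
      · right
        obtain ⟨i, hi, rfl⟩ := h
        apply (hA' T hTt).2
        intro m' h1 h2 hEq
        have := hdist i m' (by omega) h2 hEq
        omega
      · left
        push_neg at h
        exact (hA (t - T) hmt).2 e' h
    have hcup : sqcup (x (t - T)) (xs T) = x t := by
      funext e'
      by_cases h1 : ∃ i, i < t - T ∧ e' = e i
      · obtain ⟨i, hi, rfl⟩ := h1
        have hv : x (t - T) (e i) = pos i := (hA (t - T) hmt).1 i hi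
        have hvt : x t (e i) = pos i := (hA t le_rfl).1 i (by omega)
        have hvs : xs T (e i) = 0 := by
          apply (hA' T hTt).2
          intro m' hm1 hm2 hEq
          have := hdist i m' (by omega) hm2 hEq
          omega
        have hp0 : pos i ≠ 0 := by have := (hposk i (by omega)).1; omega
        rw [sqcup_apply, hv, hvs, hvt]
        simp [hp0]
      · by_cases h2 : ∃ i, t - T ≤ i ∧ i < t ∧ e' = e i
        · obtain ⟨i, hi1, hi2, rfl⟩ := h2
          have hv0 : x (t - T) (e i) = 0 := by
            apply (hA (t - T) hmt).2
            intro m' hm' hEq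
            have := hdist i m' hi2 (by omega) hEq
            omega
          have hvs : xs T (e i) = pos i := (hA' T hTt).1 i hi1 hi2
          have hvt : x t (e i) = pos i := (hA t le_rfl).1 i hi2
          rw [sqcup_apply, hv0, hvs, hvt]
          simp
        · push_neg at h1
          push_neg at h2
          have hv0 : x (t - T) e' = 0 := (hA (t - T) hmt).2 e' h1
          have hvs : xs T e' = 0 := (hA' T hTt).2 e' h2
          have hvt : x t e' = 0 := by
            apply (hA t le_rfl).2
            intro m hm hEq
            by_cases hc' : m < t - T
            · exact h1 m hc' hEq
            · exact h2 m (by omega) hm hEq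
          rw [sqcup_apply, hv0, hvs, hvt]
          simp
    have hle := dis_lemma hsub hf0 (x (t - T)) (xs T) (hxk (t - T) hmt) (hxsk T hTt) hd
    rw [hcup] at hle
    exact hle
  -- the overwritten optimum chain
  obtain ⟨oc, hocdef⟩ : ∃ oc : ℕ → V → ℕ,
      oc = fun j e' => if x j e' = 0 then o e' else x j e' := ⟨_, rfl⟩
  have hocapp : ∀ j e', oc j e' = if x j e' = 0 then o e' else x j e' := by
    intro j e'; rw [hocdef]
  have hock : ∀ j, j ≤ t → IsKSet k (oc j) := by
    intro j hj e'
    rw [hocapp]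
    split_ifs
    · exact ho e'
    · exact hxk j hj e'
  have step1 : ∀ j, j < t → f (oc j) ≤ f (oc (j+1)) + 2 * (f (x (j+1)) - f (x j)) := by
    intro j hj
    have hi1 : 1 ≤ pos j := (hposk j hj).1
    have hik : pos j ≤ k := (hposk j hj).2
    have hi0 : pos j ≠ 0 := by omega
    have hxje : x j (e j) = 0 := by
      apply (hA j hj.le).2
      intro m hm hEq
      have := hdist j m hj (lt_trans hm hj) hEq
      omega
    obtain ⟨z, hzdef⟩ : ∃ z : V → ℕ, z = fun e' => if e' = e j then 0 else oc j e' := ⟨_, rfl⟩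
    have hzapp : ∀ e', z e' = if e' = e j then 0 else oc j e' := fun e' => by rw [hzdef]
    have hzk : IsKSet k z := by
      intro e'
      rw [hzapp]
      split_ifs
      · exact Nat.zero_le k
      · exact hock j hj.le e'
    have hz0 : z (e j) = 0 := by rw [hzapp]; simp
    have hKLE : KLE (x j) z := by
      intro e' he'
      have hne : e' ≠ e j := fun hEq => he' (hEq ▸ hxje)
      rw [hzapp, if_neg hne, hocapp, if_neg he']
    have hx1v : x (j+1) (e j) = pos j := (hA (j+1) hj).1 j (Nat.lt_succ_self j)
    have hoc1 : oc (j+1) = sqcup z (singl (e j) (pos j)) := by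
      funext e'
      by_cases he : e' = e j
      · subst he
        rw [sqcup_singl_self z hz0, hocapp, hx1v, if_neg hi0]
      · rw [sqcup_singl_ne z he, hzapp, if_neg he, hocapp, hocapp]
        have hx1 : x (j+1) e' = x j e' := by rw [hxsucc j hj, sqcup_singl_ne _ he]
        rw [hx1]
    have hDeq : f (x (j+1)) = f (sqcup (x j) (singl (e j) (pos j))) := by rw [hxsucc j hj]
    have hDnn : 0 ≤ f (x (j+1)) - f (x j) := hdnn j hj
    by_cases hl0 : o (e j) = 0
    · -- e j is not selected by o
      have hocz : oc j = z := by
        funext e'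
        by_cases he : e' = e j
        · subst he
          rw [hzapp, if_pos rfl, hocapp, if_pos hxje, hl0]
        · rw [hzapp, if_neg he]
      obtain ⟨l', hl'def⟩ : ∃ l' : ℕ, l' = if pos j = 1 then 2 else 1 := ⟨_, rfl⟩
      have hl'1 : 1 ≤ l' := by rw [hl'def]; split_ifs <;> omega
      have hl'k : l' ≤ k := by rw [hl'def]; split_ifs <;> omega
      have hl'0 : l' ≠ 0 := by omega
      have hl'i : pos j ≠ l' := by rw [hl'def]; split_ifs with h <;> omega
      have hpm := pm_lemma hsub z hzk (e j) hz0 (pos j) l' hi0 hl'0 hik hl'k hl'i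
      have horth := orth_lemma hsub (x j) z (hxk j hj.le) hzk hKLE (e j) hz0 l' hl'0 hl'k
      have hbest' := hbest j hj l' hl'1 hl'k
      rw [hocz, hoc1]
      linarith [hDeq ▸ hDnn, hDeq.le, hDeq.ge]
    · have hocj : oc j = sqcup z (singl (e j) (o (e j))) := by
        funext e'
        by_cases he : e' = e j
        · subst he
          rw [sqcup_singl_self z hz0, hocapp, if_pos hxje]
        · rw [sqcup_singl_ne z he, hzapp, if_neg he]
      by_cases hli : o (e j) = pos j
      · rw [hocj, hli, ← hoc1]
        linarith
      · have hlk : o (e j) ≤ k := ho (e j)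
        have hl1 : 1 ≤ o (e j) := by omega
        have hpm := pm_lemma hsub z hzk (e j) hz0 (pos j) (o (e j)) hi0 hl0 hik hlk
          (fun h => hli h.symm)
        have horth := orth_lemma hsub (x j) z (hxk j hj.le) hzk hKLE (e j) hz0 (o (e j)) hl0 hlk
        have hbest' := hbest j hj (o (e j)) hl1 hlk
        rw [hocj, hoc1]
        linarith [hDeq.le, hDeq.ge]
  -- telescoping
  have tele : ∀ j, j ≤ t → f (oc 0) ≤ f (oc j) + 2 * (f (x j) - f (x 0)) := by
    intro j
    induction j with
    | zero => intro _; linarith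
    | succ j ih =>
      intro hj
      have h1 := step1 j hj
      have h2 := ih (Nat.le_of_succ_le hj)
      linarith
  have hoc0 : oc 0 = o := by
    funext e'
    rw [hocapp, if_pos (hx0' e')]
  have hfx0 : f (x 0) = 0 := by rw [hx0]; exact hf0
  have htel : f o ≤ f (oc t) + 2 * f (x t) := by
    have := tele t le_rfl
    rw [hoc0, hfx0] at this
    linarith
  -- saturation bound : f (oc t) ≤ 2 f (x t)
  obtain ⟨y, hydef⟩ : ∃ y : Finset V → V → ℕ,
      y = fun S e' => if e' ∈ S then o e' else x t e' := ⟨_, rfl⟩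
  have hyapp : ∀ S e', y S e' = if e' ∈ S then o e' else x t e' := by
    intro S e'; rw [hydef]
  have hyk : ∀ S, IsKSet k (y S) := by
    intro S e'
    rw [hyapp]
    split_ifs
    · exact ho e'
    · exact hxk t le_rfl e'
  obtain ⟨D, hDdef⟩ : ∃ D : Finset V,
      D = Finset.univ.filter (fun a => o a ≠ 0 ∧ x t a = 0) := ⟨_, rfl⟩
  have hDmem : ∀ a, a ∈ D ↔ (o a ≠ 0 ∧ x t a = 0) := by
    intro a; rw [hDdef]; simp
  have hfnnt : 0 ≤ f (x t) := hfnn t le_rfl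
  have hsatS : ∀ S : Finset V, S ⊆ D → f (y S) ≤ f (x t) + (∑ a ∈ S, c a) * f (x t) / B := by
    intro S
    induction S using Finset.induction_on with
    | empty =>
      intro _
      have hy0 : y ∅ = x t := by
        funext e'; rw [hyapp]; simp
      rw [hy0]
      simp
    | @insert a S ha ih =>
      intro hsub'
      have haD := hsub' (Finset.mem_insert_self a S)
      rw [hDmem] at haD
      obtain ⟨hao, hax⟩ := haD
      have hSD : S ⊆ D := fun b hb => hsub' (Finset.mem_insert_of_mem hb)
      have hy0 : y S a = 0 := by rw [hyapp, if_neg ha, hax]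
      have hstep' : y (insert a S) = sqcup (y S) (singl a (o a)) := by
        funext e'
        by_cases he : e' = a
        · subst he
          rw [sqcup_singl_self _ hy0, hyapp, if_pos (Finset.mem_insert_self e' S)]
        · rw [sqcup_singl_ne _ he, hyapp, hyapp]
          have : e' ∈ insert a S ↔ e' ∈ S := by simp [he]
          rw [if_congr this rfl rfl]
      have hoak : o a ≤ k := ho a
      have hKLE2 : KLE (x t) (y S) := by
        intro e' he'
        have hnotS : e' ∉ S := by
          intro hmem
          have := hSD hmem
          rw [hDmem] at this
          exact he' this.2
        rw [hyapp, if_neg hnotS]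
      have horth := orth_lemma hsub (x t) (y S) (hxk t le_rfl) (hyk S) hKLE2 a hy0 (o a) hao hoak
      have hsata := hsat a hao hax (o a) (by omega) hoak
      rw [marg] at hsata
      have ihh := ih hSD
      rw [hstep', Finset.sum_insert ha]
      have hq : (c a + ∑ b ∈ S, c b) * f (x t) / B
          = c a * f (x t) / B + (∑ b ∈ S, c b) * f (x t) / B := by ring
      rw [hq]
      linarith
  have hyD : y D = oc t := by
    funext e'
    rw [hyapp, hocapp]
    by_cases h1 : x t e' = 0 <;> by_cases h2 : o e' = 0
    · have : e' ∉ D := by rw [hDmem]; tauto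
      rw [if_neg this, if_pos h1, h1, h2]
    · have : e' ∈ D := by rw [hDmem]; tauto
      rw [if_pos this, if_pos h1]
    · have : e' ∉ D := by rw [hDmem]; tauto
      rw [if_neg this, if_neg h1]
    · have : e' ∉ D := by rw [hDmem]; tauto
      rw [if_neg this, if_neg h1]
  have hsumD : ∑ a ∈ D, c a ≤ cost c o := by
    rw [cost]
    apply Finset.sum_le_sum_of_subset_of_nonneg
    · intro a haD
      rw [hDmem] at haD
      simp [haD.1]
    · intro a _ _
      exact (hc a).le
  have hoct : f (oc t) ≤ 2 * f (x t) := by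
    have h1 := hsatS D (subset_refl D)
    rw [hyD] at h1
    have hsB : ∑ a ∈ D, c a ≤ B := hsumD.trans hoB
    have hS0 : 0 ≤ ∑ a ∈ D, c a := Finset.sum_nonneg (fun a _ => (hc a).le)
    have h2 : (∑ a ∈ D, c a) * f (x t) / B ≤ f (x t) := by
      rw [div_le_iff₀ hB]
      nlinarith
    linarith
  have hfo4 : f o ≤ 4 * f (x t) := by linarith
  -- endgame
  have hfo0 : 0 ≤ f o := hnn o ho
  have hfT0 : 0 ≤ f (xs T) := hnn _ (hxsk T hTt)
  by_cases hct : cost c (xs t) ≤ B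
  · have hTeq : T = t := by
      by_contra hne
      have hTlt : T < t := lt_of_le_of_ne hTt hne
      have hmax := hTmax t le_rfl hct
      rw [hcost t le_rfl, hcost T hTt, Nat.sub_self] at hmax
      have hsplit : ∑ i ∈ Finset.Ico 0 t, c (e i)
          = (∑ i ∈ Finset.Ico 0 (t - T), c (e i)) + ∑ i ∈ Finset.Ico (t - T) t, c (e i) :=
        (Finset.sum_Ico_consecutive _ (Nat.zero_le _) (Nat.sub_le t T)).symm
      have hpos : 0 < ∑ i ∈ Finset.Ico 0 (t - T), c (e i) := by
        apply Finset.sum_pos (fun i _ => hc (e i))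
        rw [Finset.nonempty_Ico]
        omega
      linarith
    subst hTeq
    have hxst : xs T = x T := by
      funext e'
      by_cases h : ∃ m, m < T ∧ e' = e m
      · obtain ⟨m, hm, rfl⟩ := h
        rw [(hA' T le_rfl).1 m (by omega) hm, (hA T le_rfl).1 m hm]
      · push_neg at h
        rw [(hA' T le_rfl).2 e' (fun m _ hm2 => h m hm2), (hA T le_rfl).2 e' h]
    rw [hxst]
    linarith
  · push_neg at hct
    have hC0 : cost c (xs 0) ≤ B := by
      rw [hcost 0 (Nat.zero_le t), Nat.sub_zero, Finset.Ico_self, Finset.sum_empty]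
      exact hB.le
    have hexists : ∃ j, j < t ∧ cost c (xs j) ≤ B ∧ ¬ cost c (xs (j+1)) ≤ B := by
      by_contra h
      push_neg at h
      have hall : ∀ j, j ≤ t → cost c (xs j) ≤ B := by
        intro j
        induction j with
        | zero => intro _; exact hC0
        | succ j ih => intro hj; exact h j hj (ih (Nat.le_of_succ_le hj))
      exact absurd (hall t le_rfl) (not_le.mpr hct)
    obtain ⟨j, hjt, hjB, hj1B⟩ := hexists
    push_neg at hj1B
    have hstep2 : cost c (xs (j+1)) = c (e (t - 1 - j)) + cost c (xs j) := by
      rw [hcost (j+1) hjt, hcost j hjt.le]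
      have h1 : t - (j+1) = t - 1 - j := by omega
      rw [h1, Finset.sum_eq_sum_Ico_succ_bot (by omega : t - 1 - j < t)]
      have h3 : (t - 1 - j) + 1 = t - j := by omega
      rw [h3]
    have hjhalf : B / 2 < cost c (xs j) := by
      have := hlight (t - 1 - j) (by omega)
      linarith
    have hTbig : B / 2 < cost c (xs T) := lt_of_lt_of_le hjhalf (hTmax j hjt.le hjB)
    have hgrow := grow (t - T) (Nat.sub_le t T) t (Nat.sub_le t T) le_rfl
    have hcT : cost c (xs T) = ∑ i ∈ Finset.Ico (t - T) t, c (e i) := hcost T hTt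
    rw [← hcT] at hgrow
    have huu0 : 0 ≤ f (x (t - T)) := hfnn _ (Nat.sub_le t T)
    have hsB2 : 1 / 2 < cost c (xs T) / B := by
      rw [lt_div_iff₀ hB]
      linarith
    have hkey : f (x (t - T)) * (3 / 2) ≤ f (x t) := by
      nlinarith [mul_le_mul_of_nonneg_left hsB2.le huu0]
    linarith
end
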